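/- arXiv:2203.06336 — 2 statements merged into one kernel-verified Lean document; each statement's English description precedes it below -/
import Mathlib

section
/- Let s be a prime power. Let A be an n1×m1 matrix over GF(s) that is an OA(n1, m1, s, 1) if m1 = 1 and an OA(n1, m1, s, 2) if m1 > 1, and for i = 1,…,n1 let B_i be an α-resolvable orthogonal array ROA(n2, m2, s, 2; α) (with its resolution into consecutive blocks of αs rows). Let F = [D_1, …, D_s] be the array E of the construction with its last m1 columns removed (i.e., with D_{s+1} removed). Then F is an α-resolvable orthogonal array ROA(n1·n2, (s−1)·m1·m2 + m2, s, 2; α): F is an OA(n1·n2, (s−1)·m1·m2 + m2, s, 2) and, partitioning its rows into n1·n2/(αs) consecutive blocks of αs rows, every column of every block is balanced. -/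
open Finset

/-- `M` (rows indexed by `R`, columns by `C`, entries in the finite field `F` with
`s = Fintype.card F` elements) is an orthogonal array of strength `t`: for any choice of `t`
distinct columns and any `t`-tuple of symbols, the number of rows showing that tuple, times
`s ^ t`, equals the number of rows (i.e. each tuple appears exactly `(card R) / s ^ t` times). -/
def IsOA {R C F : Type*} [Fintype R] [Fintype F] [DecidableEq F]
    (M : R → C → F) (t : ℕ) : Prop :=
  ∀ cols : Fin t → C, Function.Injective cols → ∀ v : Fin t → F,
    (Finset.univ.filter fun r : R => ∀ j, M r (cols j) = v j).card
      * Fintype.card F ^ t = Fintype.card R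

/-- A vector over `F` is balanced if every symbol of `F` occurs equally often among its
entries. -/
def IsBalanced {R F : Type*} [Fintype R] [Fintype F] [DecidableEq F] (v : R → F) : Prop :=
  ∀ x : F, (Finset.univ.filter fun r : R => v r = x).card * Fintype.card F = Fintype.card R

/-- `M` is a difference scheme: for any two distinct columns, the vector of entrywise
differences contains every element of `F` equally often. -/
def IsDiffScheme {R C F : Type*} [Fintype R] [Field F] [Fintype F] [DecidableEq F]
    (M : R → C → F) : Prop :=
  ∀ j j' : C, j ≠ j' → ∀ x : F,
    (Finset.univ.filter fun r : R => M r j - M r j' = x).card * Fintype.card F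
      = Fintype.card R
/-- `M` is an `α`-resolvable orthogonal array `ROA(n, m, s, 2; a)`: it is an
`OA(n, m, s, 2)`, `a·s` divides `n`, and in each of the `n/(a·s)` consecutive blocks of
`a·s` rows (row `r` lies in block `⌊r/(a·s)⌋`) every column contains every symbol exactly
`a` times (i.e. each block is an `OA(a·s, m, s, 1)`). -/
def IsROA {F : Type} [Fintype F] [DecidableEq F] {n m : ℕ}
    (M : Fin n → Fin m → F) (a : ℕ) : Prop :=
  IsOA M 2 ∧ (a * Fintype.card F ∣ n) ∧
    ∀ (k : ℕ) (l : Fin m) (x : F), (k + 1) * (a * Fintype.card F) ≤ n →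
      (Finset.univ.filter fun r : Fin n =>
        (r : ℕ) / (a * Fintype.card F) = k ∧ M r l = x).card = a

/-- The array `𝐅 = [D₁, …, D_s]` of the construction (the array `E` with the `m₁` columns of
`D_{s+1}` removed).  Rows are indexed by `I × Fin n₂`; columns `Sum.inl (g, k, l)` with `g`
running over nonzero elements of `F` are the columns of `D₁, …, D_{s−1}`, with entries
`A i k + g·(Bᵢ) j l`, and columns `Sum.inr l` are those of `D_s = B`. -/
def FmatG {I F : Type} [Field F] {m1 n2 m2 : ℕ}
    (A : I → Fin m1 → F) (B : I → Fin n2 → Fin m2 → F) :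
    (I × Fin n2) → (({g : F // g ≠ 0} × Fin m1 × Fin m2) ⊕ Fin m2) → F
  | p, Sum.inl (g, k, l) => A p.1 k + g.1 * B p.1 p.2 l
  | p, Sum.inr l => B p.1 p.2 l

set_option linter.unusedSectionVars false

section Helpers
variable {F : Type} [Field F] [Fintype F] [DecidableEq F]

lemma shift_iff {g b c v : F} (hg : g ≠ 0) : c + g * b = v ↔ b = g⁻¹ * (v - c) := by
  constructor
  · intro h
    have h2 : g * b = v - c := by rw [← h]; ring
    rw [← h2, inv_mul_cancel_left₀ hg]
  · intro h
    rw [h, mul_inv_cancel_left₀ hg]; ring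

lemma prod_card {α β : Type*} [Fintype α] [Fintype β] (P : α → β → Prop)
    [∀ i j, Decidable (P i j)] :
    (univ.filter fun p : α × β => P p.1 p.2).card
      = ∑ i : α, (univ.filter fun j : β => P i j).card := by
  simp only [Finset.card_filter]
  rw [Fintype.sum_prod_type]

lemma sum_mul_const {α : Type*} (s : Finset α) (f : α → ℕ) (c n : ℕ)
    (h : ∀ i ∈ s, f i * c = n) : (∑ i ∈ s, f i) * c = s.card * n := by
  rw [Finset.sum_mul, Finset.sum_congr rfl h, Finset.sum_const, smul_eq_mul]

lemma oa2_count {n m : ℕ} (M : Fin n → Fin m → F) (h : IsOA M 2) {l l' : Fin m}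
    (hll : l ≠ l') (x y : F) :
    (univ.filter fun r => M r l = x ∧ M r l' = y).card * Fintype.card F ^ 2 = n := by
  have hinj : Function.Injective ![l, l'] := by
    intro a b hab
    fin_cases a <;> fin_cases b <;> simp_all
  have h2 := h ![l, l'] hinj ![x, y]
  rw [Fintype.card_fin] at h2
  have heq : (univ.filter fun r : Fin n => ∀ j, M r (![l, l'] j) = ![x, y] j)
      = univ.filter fun r => M r l = x ∧ M r l' = y := by
    apply Finset.filter_congr
    intro r _
    rw [Fin.forall_fin_two]
    simp
  rw [heq] at h2
  exact h2

lemma lin_count {n m : ℕ} (M : Fin n → Fin m → F) (h : IsOA M 2) {k k' : Fin m}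
    (hkk : k ≠ k') (c d : F) :
    (univ.filter fun r => M r k' = c * M r k + d).card * Fintype.card F = n := by
  have hs : 0 < Fintype.card F := Fintype.card_pos
  have hsplit := Finset.card_eq_sum_card_fiberwise
    (f := fun r : Fin n => M r k) (s := univ.filter fun r => M r k' = c * M r k + d)
    (t := (univ : Finset F)) (fun r _ => mem_univ _)
  have hfib : ∀ w ∈ (univ : Finset F),
      (((univ.filter fun r => M r k' = c * M r k + d)).filter fun r => M r k = w).card
        * Fintype.card F ^ 2 = n := by
    intro w _
    rw [Finset.filter_filter]
    have heq : (univ.filter fun r => (M r k' = c * M r k + d) ∧ M r k = w)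
        = univ.filter fun r => M r k = w ∧ M r k' = c * w + d := by
      apply Finset.filter_congr
      intro r _
      constructor
      · rintro ⟨h1, h2⟩; exact ⟨h2, by rw [h1, h2]⟩
      · rintro ⟨h1, h2⟩; exact ⟨by rw [h2, h1], h1⟩
    rw [heq]
    exact oa2_count M h hkk w (c * w + d)
  have hmul : (univ.filter fun r => M r k' = c * M r k + d).card * Fintype.card F ^ 2
      = Fintype.card F * n := by
    rw [hsplit, sum_mul_const _ _ _ n hfib, Finset.card_univ]
  have h3 : (univ.filter fun r => M r k' = c * M r k + d).card * Fintype.card F * Fintype.card F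
      = n * Fintype.card F := by
    rw [mul_assoc, ← pow_two, hmul, mul_comm]
  exact Nat.eq_of_mul_eq_mul_right hs h3

lemma roa_count1 {n m a : ℕ} (M : Fin n → Fin m → F) (h : IsROA M a)
    (l : Fin m) (x : F) :
    (univ.filter fun r => M r l = x).card * Fintype.card F = n := by
  obtain ⟨-, ⟨q, hq⟩, hblk⟩ := h
  have hs : 0 < Fintype.card F := Fintype.card_pos
  rcases Nat.eq_zero_or_pos a with rfl | ha
  · simp at hq
    subst hq
    simp
  have has : 0 < a * Fintype.card F := Nat.mul_pos ha hs
  have hsplit := Finset.card_eq_sum_card_fiberwise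
    (f := fun r : Fin n => (r : ℕ) / (a * Fintype.card F))
    (s := univ.filter fun r => M r l = x) (t := Finset.range q)
    (fun r _ => by
      rw [Finset.mem_coe, Finset.mem_range, Nat.div_lt_iff_lt_mul has]
      rw [mul_comm]
      exact hq ▸ r.isLt)
  have hfib : ∀ w ∈ Finset.range q,
      ((univ.filter fun r => M r l = x).filter
        fun r : Fin n => (r : ℕ) / (a * Fintype.card F) = w).card = a := by
    intro w hw
    rw [Finset.mem_range] at hw
    rw [Finset.filter_filter]
    have heq : (univ.filter fun r : Fin n =>
          M r l = x ∧ (r : ℕ) / (a * Fintype.card F) = w)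
        = univ.filter fun r : Fin n =>
          (r : ℕ) / (a * Fintype.card F) = w ∧ M r l = x := by
      apply Finset.filter_congr
      intro r _
      exact and_comm
    rw [heq]
    apply hblk w l x
    calc (w + 1) * (a * Fintype.card F) ≤ q * (a * Fintype.card F) :=
          Nat.mul_le_mul_right _ hw
      _ = n := by rw [hq, mul_comm]
  have hc : (univ.filter fun r => M r l = x).card = q * a := by
    rw [hsplit, Finset.sum_congr rfl hfib, Finset.sum_const, Finset.card_range, smul_eq_mul]
  rw [hc, hq]
  ring
end Helpers

section Helpers2
variable {F : Type} [Field F] [Fintype F] [DecidableEq F]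

lemma A_count1 {n m : ℕ} (M : Fin n → Fin m → F) (hm : 0 < m)
    (h1 : m = 1 → IsOA M 1) (h2 : 1 < m → IsOA M 2) (k : Fin m) (x : F) :
    (univ.filter fun r => M r k = x).card * Fintype.card F = n := by
  rcases eq_or_lt_of_le (Nat.succ_le_of_lt hm) with hm1 | hm2
  · -- m = 1
    have hoa := h1 hm1.symm
    have hinj : Function.Injective ![k] := fun a b _ => Subsingleton.elim a b
    have h3 := hoa ![k] hinj ![x]
    rw [Fintype.card_fin, pow_one] at h3
    have heq : (univ.filter fun r : Fin n => ∀ j, M r (![k] j) = ![x] j)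
        = univ.filter fun r => M r k = x := by
      apply Finset.filter_congr
      intro r _
      rw [Fin.forall_fin_one]
      simp
    rw [heq] at h3
    exact h3
  · -- 1 < m
    have hk0 : ∃ k0 : Fin m, k0 ≠ k := by
      by_cases hk : (k : ℕ) = 0
      · exact ⟨⟨1, hm2⟩, by intro h; rw [← h] at hk; simp at hk⟩
      · exact ⟨⟨0, hm⟩, by intro h; rw [← h] at hk; simp at hk⟩
    obtain ⟨k0, hk0⟩ := hk0
    have h3 := lin_count M (h2 hm2) hk0 0 x
    simpa using h3

lemma two_eq_count {n m a : ℕ} (M : Fin n → Fin m → F) (hM : IsROA M a)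
    (l : Fin m) (c d : F) :
    (univ.filter fun j => M j l = c ∧ M j l = d).card * Fintype.card F
      = if c = d then n else 0 := by
  by_cases hcd : c = d
  · subst hcd
    rw [if_pos rfl]
    have heq : (univ.filter fun j : Fin n => M j l = c ∧ M j l = c)
        = univ.filter fun j => M j l = c :=
      Finset.filter_congr fun r _ => and_self_iff
    rw [heq]
    exact roa_count1 M hM l c
  · rw [if_neg hcd]
    have heq : (univ.filter fun j : Fin n => M j l = c ∧ M j l = d) = ∅ := by
      apply Finset.filter_false_of_mem
      rintro r _ ⟨h1, h2⟩
      exact hcd (h1 ▸ h2 ▸ rfl)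
    rw [heq]
    simp

end Helpers2


section Keys
variable {F : Type} [Field F] [Fintype F] [DecidableEq F]

lemma prod_card' {α β : Type*} [Fintype α] [Fintype β] (P : α × β → Prop)
    [DecidablePred P] :
    (univ.filter P).card = ∑ i : α, (univ.filter fun j : β => P (i, j)).card := by
  simp only [Finset.card_filter]
  rw [Fintype.sum_prod_type]

lemma sum_mul_ite {α : Type*} [Fintype α] (f : α → ℕ) (P : α → Prop) [DecidablePred P]
    (c s : ℕ) (h : ∀ i, f i * s = if P i then c else 0) :
    (∑ i : α, f i) * s = (univ.filter P).card * c := by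
  rw [Finset.sum_mul, Finset.sum_congr rfl (fun i _ => h i), ← Finset.sum_filter,
    Finset.sum_const, smul_eq_mul]

lemma count_and_comm {R : Type*} [Fintype R] (P Q : R → Prop)
    [DecidablePred P] [DecidablePred Q] :
    (univ.filter fun r => P r ∧ Q r).card = (univ.filter fun r => Q r ∧ P r).card := by
  congr 1
  exact Finset.filter_congr fun r _ => by tauto

variable {n1 m1 n2 m2 a : ℕ}

lemma key_rr (ha : 0 < a)
    (B : Fin n1 → Fin n2 → Fin m2 → F) (hB : ∀ i, IsROA (B i) a)
    {l l' : Fin m2} (hll : l ≠ l') (v1 v2 : F) :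
    (univ.filter fun p : Fin n1 × Fin n2 =>
        B p.1 p.2 l = v1 ∧ B p.1 p.2 l' = v2).card * Fintype.card F ^ 2 = n1 * n2 := by
  calc (univ.filter fun p : Fin n1 × Fin n2 =>
        B p.1 p.2 l = v1 ∧ B p.1 p.2 l' = v2).card * Fintype.card F ^ 2
      = (∑ i : Fin n1, (univ.filter fun j : Fin n2 =>
          B i j l = v1 ∧ B i j l' = v2).card) * Fintype.card F ^ 2 := by
        rw [prod_card']
    _ = (univ : Finset (Fin n1)).card * n2 :=
        sum_mul_const _ _ _ _ (fun i _ => oa2_count (B i) (hB i).1 hll v1 v2)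
    _ = n1 * n2 := by simp

lemma key_lr (ha : 0 < a) (hm1 : 0 < m1)
    (A : Fin n1 → Fin m1 → F) (B : Fin n1 → Fin n2 → Fin m2 → F)
    (hA1 : m1 = 1 → IsOA A 1) (hA2 : 1 < m1 → IsOA A 2)
    (hB : ∀ i, IsROA (B i) a)
    {g : F} (hg : g ≠ 0) (k : Fin m1) (l l' : Fin m2) (v1 v2 : F) :
    (univ.filter fun p : Fin n1 × Fin n2 =>
        A p.1 k + g * B p.1 p.2 l = v1 ∧ B p.1 p.2 l' = v2).card * Fintype.card F ^ 2
      = n1 * n2 := by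
  have hs : 0 < Fintype.card F := Fintype.card_pos
  have heq : (univ.filter fun p : Fin n1 × Fin n2 =>
        A p.1 k + g * B p.1 p.2 l = v1 ∧ B p.1 p.2 l' = v2)
      = univ.filter fun p : Fin n1 × Fin n2 =>
        B p.1 p.2 l = g⁻¹ * (v1 - A p.1 k) ∧ B p.1 p.2 l' = v2 :=
    Finset.filter_congr fun p _ => and_congr_left' (shift_iff hg)
  rw [heq]
  by_cases hll : l = l'
  · subst hll
    rw [prod_card']
    have hf : ∀ i : Fin n1, (univ.filter fun j : Fin n2 =>
          B i j l = g⁻¹ * (v1 - A i k) ∧ B i j l = v2).card * Fintype.card F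
        = if g⁻¹ * (v1 - A i k) = v2 then n2 else 0 :=
      fun i => two_eq_count (B i) (hB i) l _ _
    have h1 : (∑ i : Fin n1, (univ.filter fun j : Fin n2 =>
          B i j l = g⁻¹ * (v1 - A i k) ∧ B i j l = v2).card) * Fintype.card F
        = (univ.filter fun i : Fin n1 => g⁻¹ * (v1 - A i k) = v2).card * n2 :=
      sum_mul_ite _ _ _ _ hf
    have hPiff : ∀ i : Fin n1, (g⁻¹ * (v1 - A i k) = v2) ↔ (A i k = v1 - g * v2) := by
      intro i
      constructor
      · intro h
        have h2 : v1 - A i k = g * v2 := by rw [← h, mul_inv_cancel_left₀ hg]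
        linear_combination -h2
      · intro h
        rw [h, sub_sub_cancel, inv_mul_cancel_left₀ hg]
    have h2 : (univ.filter fun i : Fin n1 => g⁻¹ * (v1 - A i k) = v2).card
        = (univ.filter fun i : Fin n1 => A i k = v1 - g * v2).card := by
      congr 1
      exact Finset.filter_congr fun i _ => hPiff i
    have h3 := A_count1 A hm1 hA1 hA2 k (v1 - g * v2)
    rw [pow_two, ← mul_assoc, h1, h2, mul_right_comm, h3]
  · rw [prod_card']
    calc (∑ i : Fin n1, (univ.filter fun j : Fin n2 =>
          B i j l = g⁻¹ * (v1 - A i k) ∧ B i j l' = v2).card) * Fintype.card F ^ 2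
        = (univ : Finset (Fin n1)).card * n2 :=
          sum_mul_const _ _ _ _ (fun i _ => oa2_count (B i) (hB i).1 hll _ _)
      _ = n1 * n2 := by simp

end Keys

section KeyLL
variable {F : Type} [Field F] [Fintype F] [DecidableEq F]
variable {n1 m1 n2 m2 a : ℕ}

lemma key_ll (ha : 0 < a) (hm1 : 0 < m1)
    (A : Fin n1 → Fin m1 → F) (B : Fin n1 → Fin n2 → Fin m2 → F)
    (hA1 : m1 = 1 → IsOA A 1) (hA2 : 1 < m1 → IsOA A 2)
    (hB : ∀ i, IsROA (B i) a)
    {g g' : F} (hg : g ≠ 0) (hg' : g' ≠ 0) (k k' : Fin m1) (l l' : Fin m2)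
    (hd : l = l' → g ≠ g' ∨ k ≠ k') (v1 v2 : F) :
    (univ.filter fun p : Fin n1 × Fin n2 =>
        A p.1 k + g * B p.1 p.2 l = v1 ∧ A p.1 k' + g' * B p.1 p.2 l' = v2).card
      * Fintype.card F ^ 2 = n1 * n2 := by
  have hs : 0 < Fintype.card F := Fintype.card_pos
  have heq : (univ.filter fun p : Fin n1 × Fin n2 =>
        A p.1 k + g * B p.1 p.2 l = v1 ∧ A p.1 k' + g' * B p.1 p.2 l' = v2)
      = univ.filter fun p : Fin n1 × Fin n2 =>
        B p.1 p.2 l = g⁻¹ * (v1 - A p.1 k) ∧ B p.1 p.2 l' = g'⁻¹ * (v2 - A p.1 k') :=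
    Finset.filter_congr fun p _ => and_congr (shift_iff hg) (shift_iff hg')
  rw [heq]
  by_cases hll : l = l'
  · subst hll
    obtain hgk := hd rfl
    rw [prod_card']
    have hf : ∀ i : Fin n1, (univ.filter fun j : Fin n2 =>
          B i j l = g⁻¹ * (v1 - A i k) ∧ B i j l = g'⁻¹ * (v2 - A i k')).card
          * Fintype.card F
        = if g⁻¹ * (v1 - A i k) = g'⁻¹ * (v2 - A i k') then n2 else 0 :=
      fun i => two_eq_count (B i) (hB i) l _ _
    have h1 : (∑ i : Fin n1, (univ.filter fun j : Fin n2 =>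
          B i j l = g⁻¹ * (v1 - A i k) ∧ B i j l = g'⁻¹ * (v2 - A i k')).card)
          * Fintype.card F
        = (univ.filter fun i : Fin n1 =>
            g⁻¹ * (v1 - A i k) = g'⁻¹ * (v2 - A i k')).card * n2 :=
      sum_mul_ite _ _ _ _ hf
    have hcount : (univ.filter fun i : Fin n1 =>
        g⁻¹ * (v1 - A i k) = g'⁻¹ * (v2 - A i k')).card * Fintype.card F = n1 := by
      by_cases hkk : k = k'
      · subst hkk
        have hgg : g ≠ g' := by
          rcases hgk with h | h
          · exact h
          · exact absurd rfl h
        have he : g⁻¹ - g'⁻¹ ≠ 0 := by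
          rw [sub_ne_zero]
          exact fun h => hgg (inv_injective h)
        have hPiff : ∀ i : Fin n1,
            (g⁻¹ * (v1 - A i k) = g'⁻¹ * (v2 - A i k)) ↔
            (A i k = (g⁻¹ - g'⁻¹)⁻¹ * (g⁻¹ * v1 - g'⁻¹ * v2)) := by
          intro i
          constructor
          · intro h
            have h2 : (g⁻¹ - g'⁻¹) * A i k = g⁻¹ * v1 - g'⁻¹ * v2 := by
              linear_combination -h
            rw [← h2, inv_mul_cancel_left₀ he]
          · intro h
            have h2 : (g⁻¹ - g'⁻¹) * A i k = g⁻¹ * v1 - g'⁻¹ * v2 := by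
              rw [h, mul_inv_cancel_left₀ he]
            linear_combination -h2
        have h2 : (univ.filter fun i : Fin n1 =>
            g⁻¹ * (v1 - A i k) = g'⁻¹ * (v2 - A i k)).card
            = (univ.filter fun i : Fin n1 =>
              A i k = (g⁻¹ - g'⁻¹)⁻¹ * (g⁻¹ * v1 - g'⁻¹ * v2)).card := by
          congr 1
          exact Finset.filter_congr fun i _ => hPiff i
        rw [h2]
        exact A_count1 A hm1 hA1 hA2 k _
      · have hm2 : 1 < m1 := by
          rcases Nat.lt_or_ge 1 m1 with h | h
          · exact h
          · exfalso
            apply hkk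
            have h1 := k.isLt
            have h2 := k'.isLt
            apply Fin.ext
            omega
        have hgg' : g' * g'⁻¹ = 1 := mul_inv_cancel₀ hg'
        have hPiff : ∀ i : Fin n1,
            (g⁻¹ * (v1 - A i k) = g'⁻¹ * (v2 - A i k')) ↔
            (A i k' = (g' * g⁻¹) * A i k + (v2 - (g' * g⁻¹) * v1)) := by
          intro i
          constructor
          · intro h
            have h2 : v2 - A i k' = g' * (g⁻¹ * (v1 - A i k)) := by
              rw [h, mul_inv_cancel_left₀ hg']
            linear_combination -h2
          · intro h
            rw [h]
            linear_combination (g⁻¹ * A i k - g⁻¹ * v1) * hgg'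
        have h2 : (univ.filter fun i : Fin n1 =>
            g⁻¹ * (v1 - A i k) = g'⁻¹ * (v2 - A i k')).card
            = (univ.filter fun i : Fin n1 =>
              A i k' = (g' * g⁻¹) * A i k + (v2 - (g' * g⁻¹) * v1)).card := by
          congr 1
          exact Finset.filter_congr fun i _ => hPiff i
        rw [h2]
        exact lin_count A (hA2 hm2) hkk _ _
    rw [pow_two, ← mul_assoc, h1, mul_right_comm, hcount]
  · rw [prod_card']
    calc (∑ i : Fin n1, (univ.filter fun j : Fin n2 =>
          B i j l = g⁻¹ * (v1 - A i k) ∧ B i j l' = g'⁻¹ * (v2 - A i k')).card)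
          * Fintype.card F ^ 2
        = (univ : Finset (Fin n1)).card * n2 :=
          sum_mul_const _ _ _ _ (fun i _ => oa2_count (B i) (hB i).1 hll _ _)
      _ = n1 * n2 := by simp

end KeyLL

section Main
variable {F : Type} [Field F] [Fintype F] [DecidableEq F]
variable {n1 m1 n2 m2 a : ℕ}

lemma key_main (ha : 0 < a) (hm1 : 0 < m1)
    (A : Fin n1 → Fin m1 → F) (B : Fin n1 → Fin n2 → Fin m2 → F)
    (hA1 : m1 = 1 → IsOA A 1) (hA2 : 1 < m1 → IsOA A 2)
    (hB : ∀ i, IsROA (B i) a)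
    (c1 c2 : ({g : F // g ≠ 0} × Fin m1 × Fin m2) ⊕ Fin m2) (hne : c1 ≠ c2)
    (v1 v2 : F) :
    (univ.filter fun p : Fin n1 × Fin n2 =>
        FmatG A B p c1 = v1 ∧ FmatG A B p c2 = v2).card * Fintype.card F ^ 2
      = n1 * n2 := by
  rcases c1 with ⟨g, k, l⟩ | l
  · rcases c2 with ⟨g', k', l'⟩ | l'
    · have e1 : ∀ p : Fin n1 × Fin n2,
          FmatG A B p (Sum.inl (g, k, l)) = A p.1 k + g.1 * B p.1 p.2 l := fun p => rfl
      have e2 : ∀ p : Fin n1 × Fin n2,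
          FmatG A B p (Sum.inl (g', k', l')) = A p.1 k' + g'.1 * B p.1 p.2 l' :=
        fun p => rfl
      simp only [e1, e2]
      apply key_ll ha hm1 A B hA1 hA2 hB g.2 g'.2 k k' l l' _ v1 v2
      intro hl
      by_contra hcon
      push_neg at hcon
      obtain ⟨hgg, hkk⟩ := hcon
      exact hne (by subst hl; rw [Subtype.ext hgg, hkk])
    · have e1 : ∀ p : Fin n1 × Fin n2,
          FmatG A B p (Sum.inl (g, k, l)) = A p.1 k + g.1 * B p.1 p.2 l := fun p => rfl
      have e2 : ∀ p : Fin n1 × Fin n2,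
          FmatG A B p (Sum.inr l') = B p.1 p.2 l' := fun p => rfl
      simp only [e1, e2]
      exact key_lr ha hm1 A B hA1 hA2 hB g.2 k l l' v1 v2
  · rcases c2 with ⟨g', k', l'⟩ | l'
    · have e1 : ∀ p : Fin n1 × Fin n2,
          FmatG A B p (Sum.inr l) = B p.1 p.2 l := fun p => rfl
      have e2 : ∀ p : Fin n1 × Fin n2,
          FmatG A B p (Sum.inl (g', k', l')) = A p.1 k' + g'.1 * B p.1 p.2 l' :=
        fun p => rfl
      simp only [e1, e2]
      rw [count_and_comm]
      exact key_lr ha hm1 A B hA1 hA2 hB g'.2 k' l' l v2 v1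
    · have e1 : ∀ p : Fin n1 × Fin n2,
          FmatG A B p (Sum.inr l) = B p.1 p.2 l := fun p => rfl
      have e2 : ∀ p : Fin n1 × Fin n2,
          FmatG A B p (Sum.inr l') = B p.1 p.2 l' := fun p => rfl
      simp only [e1, e2]
      have hll : l ≠ l' := fun h => hne (by rw [h])
      exact key_rr ha B hB hll v1 v2

end Main


/-- Proposition 5: if `A` is an `OA(n₁, m₁, s, 1)` for `m₁ = 1` (resp. an
`OA(n₁, m₁, s, 2)` for `m₁ > 1`) and each `Bᵢ` is an `ROA(n₂, m₂, s, 2; a)`, then `𝐅` is an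
`ROA(n₁n₂, (s−1)m₁m₂ + m₂, s, 2; a)`: `𝐅` is an orthogonal array of strength two, and in the
partition of its rows into consecutive blocks of `a·s` rows (under the row order
`(i, j) ↦ (i−1)·n₂ + j`, these blocks are given by an index `i` of a block of `A` together
with a block `k` of `Bᵢ`), every column of every block contains each symbol exactly `a`
times. -/
theorem statement16 {F : Type} [Field F] [Fintype F] [DecidableEq F]
    {n1 m1 n2 m2 a : ℕ} (ha : 0 < a) (hm1 : 0 < m1)
    (A : Fin n1 → Fin m1 → F) (B : Fin n1 → Fin n2 → Fin m2 → F)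
    (hA1 : m1 = 1 → IsOA A 1) (hA2 : 1 < m1 → IsOA A 2)
    (hB : ∀ i, IsROA (B i) a) :
    IsOA (FmatG A B) 2 ∧
    Fintype.card (({g : F // g ≠ 0} × Fin m1 × Fin m2) ⊕ Fin m2)
      = (Fintype.card F - 1) * m1 * m2 + m2 ∧
    (a * Fintype.card F ∣ n1 * n2) ∧
    ∀ (i : Fin n1) (k : ℕ) (col : ({g : F // g ≠ 0} × Fin m1 × Fin m2) ⊕ Fin m2) (x : F),
      (k + 1) * (a * Fintype.card F) ≤ n2 →
      (Finset.univ.filter fun j : Fin n2 =>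
        (j : ℕ) / (a * Fintype.card F) = k ∧ FmatG A B (i, j) col = x).card = a := by
  refine ⟨?_, ?_, ?_, ?_⟩
  · -- IsOA 2
    intro cols hinj v
    have hne : cols 0 ≠ cols 1 := fun h => absurd (hinj h) (by decide)
    have hk := key_main ha hm1 A B hA1 hA2 hB (cols 0) (cols 1) hne (v 0) (v 1)
    have heq : (univ.filter fun r : Fin n1 × Fin n2 =>
          ∀ j, FmatG A B r (cols j) = v j)
        = univ.filter fun r : Fin n1 × Fin n2 =>
          FmatG A B r (cols 0) = v 0 ∧ FmatG A B r (cols 1) = v 1 := by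
      apply Finset.filter_congr
      intro r _
      rw [Fin.forall_fin_two]
    rw [heq, hk]
    simp
  · -- card computation
    have h1 : Fintype.card {g : F // g ≠ 0} = Fintype.card F - 1 := by
      rw [Fintype.card_subtype_compl, Fintype.card_subtype_eq]
    simp [Fintype.card_sum, Fintype.card_prod, h1, mul_assoc]
  · -- divisibility
    rcases Nat.eq_zero_or_pos n1 with h | h
    · simp [h]
    · exact ((hB ⟨0, h⟩).2.1).mul_left n1
  · -- block balance
    intro i k col x hkn
    rcases col with ⟨g, k', l⟩ | l
    · have e1 : ∀ j : Fin n2,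
          FmatG A B (i, j) (Sum.inl (g, k', l)) = A i k' + g.1 * B i j l := fun j => rfl
      have heq : (univ.filter fun j : Fin n2 =>
            (j : ℕ) / (a * Fintype.card F) = k ∧
              FmatG A B (i, j) (Sum.inl (g, k', l)) = x)
          = univ.filter fun j : Fin n2 =>
            (j : ℕ) / (a * Fintype.card F) = k ∧ B i j l = g.1⁻¹ * (x - A i k') := by
        apply Finset.filter_congr
        intro j _
        rw [e1 j]
        exact and_congr_right fun _ => shift_iff g.2
      rw [heq]
      exact (hB i).2.2 k l _ hkn
    · have e1 : ∀ j : Fin n2,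
          FmatG A B (i, j) (Sum.inr l) = B i j l := fun j => rfl
      have heq : (univ.filter fun j : Fin n2 =>
            (j : ℕ) / (a * Fintype.card F) = k ∧ FmatG A B (i, j) (Sum.inr l) = x)
          = univ.filter fun j : Fin n2 =>
            (j : ℕ) / (a * Fintype.card F) = k ∧ B i j l = x := by
        apply Finset.filter_congr
        intro j _
        rw [e1 j]
      rw [heq]
      exact (hB i).2.2 k l x hkn
end

section
/- Let s be a prime power and α a positive integer. If there exists an α-resolvable orthogonal array ROA(n2, m2, s, 2; α) with m2 = n2·(1 − 1/(αs))/(s−1), then for every positive integer k there exists an α-resolvable orthogonal array ROA(n2·s^k, m, s, 2; α) with m = n2·s^k·(1 − 1/(αs))/(s−1). -/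
set_option linter.unusedSectionVars false
set_option linter.unusedVariables false
set_option maxHeartbeats 1000000


open Finset

lemma finCount' {N : ℕ} (p : Fin N → Prop) [DecidablePred p] (q : ℕ → Prop) [DecidablePred q]
    (hpq : ∀ r : Fin N, p r ↔ q r.val) :
    (univ.filter p).card = ((range N).filter q).card := by
  rw [Finset.card_filter, Finset.card_filter,
    ← Fin.sum_univ_eq_sum_range (fun i => if q i then 1 else 0)]
  exact Finset.sum_congr rfl fun r _ => by simp [hpq r]

lemma range_mul_split (n s : ℕ) (q : ℕ → Prop) [DecidablePred q] :
    ((range (n*s)).filter q).card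
      = ∑ u ∈ range s, ((range n).filter fun r => q (n*u+r)).card := by
  rcases Nat.eq_zero_or_pos n with hn | hn
  · subst hn; simp
  · rw [Finset.card_filter]
    have h : ∑ u ∈ range s, ((range n).filter fun r => q (n*u+r)).card
        = ∑ p ∈ range s ×ˢ range n, (if q (n*p.1+p.2) then 1 else 0) := by
      rw [Finset.sum_product]
      exact Finset.sum_congr rfl fun u _ => Finset.card_filter _ _
    rw [h]
    refine Finset.sum_nbij' (fun i => (i / n, i % n)) (fun p => n * p.1 + p.2) ?_ ?_ ?_ ?_ ?_
    · intro i hi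
      simp only [mem_range, mem_product] at *
      refine ⟨by rw [Nat.div_lt_iff_lt_mul hn, Nat.mul_comm]; exact hi, Nat.mod_lt _ hn⟩
    · intro p hp
      simp only [mem_range, mem_product] at *
      calc n * p.1 + p.2 < n * p.1 + n := by omega
        _ ≤ n * s := by have := hp.1; nlinarith
    · intro i _; exact Nat.div_add_mod i n
    · intro p hp
      simp only [mem_range, mem_product] at hp
      have h1 : (n * p.1 + p.2) / n = p.1 + p.2 / n := Nat.mul_add_div hn _ _
      have h2 : (n * p.1 + p.2) % n = p.2 % n := Nat.mul_add_mod _ _ _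
      have h3 := hp.2
      rw [Prod.ext_iff]
      exact ⟨by simp [h1, Nat.div_eq_of_lt h3], by simp [h2, Nat.mod_eq_of_lt h3]⟩
    · intro i _; rw [Nat.div_add_mod]

lemma col_bal {F : Type} [Fintype F] [DecidableEq F] {n m a : ℕ}
    (hs : 0 < Fintype.card F) (ha : 0 < a)
    (M : Fin n → Fin m → F) (hM : IsROA M a) (l : Fin m) (x : F) :
    (univ.filter fun r : Fin n => M r l = x).card * Fintype.card F = n := by
  obtain ⟨t, ht⟩ := hM.2.1
  have hb : 0 < a * Fintype.card F := Nat.mul_pos ha hs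
  have hsplit : (univ.filter fun r : Fin n => M r l = x)
      = (range t).biUnion fun k => univ.filter fun r : Fin n =>
          (r:ℕ)/(a*Fintype.card F) = k ∧ M r l = x := by
    ext r
    simp only [mem_filter, mem_biUnion, mem_range, mem_univ, true_and]
    constructor
    · intro hr
      refine ⟨(r:ℕ)/(a*Fintype.card F), ?_, rfl, hr⟩
      rw [Nat.div_lt_iff_lt_mul hb]
      calc (r:ℕ) < n := r.isLt
        _ = t * (a*Fintype.card F) := by rw [ht]; ring
    · rintro ⟨k, _, _, hr⟩; exact hr
  rw [hsplit, Finset.card_biUnion]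
  · have hc : ∀ k ∈ range t, (univ.filter fun r : Fin n =>
        (r:ℕ)/(a*Fintype.card F) = k ∧ M r l = x).card = a := by
      intro k hk
      refine hM.2.2 k l x ?_
      rw [ht]
      have hk1 : k + 1 ≤ t := by simpa using hk
      calc (k+1) * (a*Fintype.card F) ≤ t * (a*Fintype.card F) := Nat.mul_le_mul_right _ hk1
        _ = a*Fintype.card F*t := by ring
    rw [Finset.sum_congr rfl hc, Finset.sum_const, card_range, smul_eq_mul, ht]
    ring
  · intro k _ k' _ hkk
    simp only [Finset.disjoint_left, mem_filter]
    rintro r ⟨_, h1, _⟩ ⟨_, h2, _⟩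
    exact hkk (by omega)

section aux
variable {F : Type} [Field F] [Fintype F] [DecidableEq F]

noncomputable def gfun (F : Type) [Field F] [Fintype F] (i : ℕ) : F :=
  (Fintype.equivFin F).symm ⟨i % Fintype.card F, Nat.mod_lt _ Fintype.card_pos⟩

lemma gfun_inj {u u' : ℕ} (hu : u < Fintype.card F) (hu' : u' < Fintype.card F)
    (h : gfun F u = gfun F u') : u = u' := by
  have h2 : u % Fintype.card F = u' % Fintype.card F :=
    congrArg Fin.val ((Fintype.equivFin F).symm.injective h)
  rwa [Nat.mod_eq_of_lt hu, Nat.mod_eq_of_lt hu'] at h2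

lemma gfun_apply (z : F) : gfun F ((Fintype.equivFin F) z).val = z := by
  unfold gfun
  have h : (⟨((Fintype.equivFin F) z).val % Fintype.card F, Nat.mod_lt _ Fintype.card_pos⟩ :
      Fin (Fintype.card F)) = (Fintype.equivFin F) z :=
    Fin.ext (Nat.mod_eq_of_lt ((Fintype.equivFin F) z).isLt)
  rw [h, Equiv.symm_apply_apply]

variable {n m : ℕ}

noncomputable def Qfun (hn : 0 < n) (hm : 0 < m) (M : Fin n → Fin m → F) (i j : ℕ) : F :=
  M ⟨i % n, Nat.mod_lt _ hn⟩ ⟨j % m, Nat.mod_lt _ hm⟩ + gfun F (i / n) * gfun F (j / m)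

lemma Qfun_shift (hn : 0 < n) (hm : 0 < m) (M : Fin n → Fin m → F) (u r : ℕ) (hr : r < n)
    (j : ℕ) :
    Qfun hn hm M (n*u+r) j
      = M ⟨r % n, Nat.mod_lt _ hn⟩ ⟨j % m, Nat.mod_lt _ hm⟩ + gfun F u * gfun F (j / m) := by
  unfold Qfun
  have h1 : (⟨(n*u+r) % n, Nat.mod_lt _ hn⟩ : Fin n) = ⟨r % n, Nat.mod_lt _ hn⟩ :=
    Fin.ext (Nat.mul_add_mod _ _ _)
  have h2 : (n*u+r)/n = u := by rw [Nat.mul_add_div hn, Nat.div_eq_of_lt hr, Nat.add_zero]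
  rw [h1, h2]

end aux

lemma step {F : Type} [Field F] [Fintype F] [DecidableEq F] {n m a : ℕ} (ha : 0 < a)
    (M : Fin n → Fin m → F) (hM : IsROA M a) :
    ∃ N : Fin (n * Fintype.card F) → Fin (m * Fintype.card F) → F, IsROA N a := by
  classical
  have hs : 0 < Fintype.card F := Fintype.card_pos
  rcases Nat.eq_zero_or_pos n with hn | hn
  · subst hn
    haveI hE : IsEmpty (Fin (0 * Fintype.card F)) := by rw [Nat.zero_mul]; infer_instance
    refine ⟨fun r _ => isEmptyElim r, ?_, ?_, ?_⟩
    · intro cols hinj v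
      simp
    · simp
    · intro K l x hK
      exfalso
      simp only [Nat.zero_mul, Nat.le_zero] at hK
      rcases Nat.mul_eq_zero.mp hK with h3 | h3
      · omega
      · have h4 := Nat.mul_pos ha hs
        omega
  rcases Nat.eq_zero_or_pos m with hm | hm
  · subst hm
    haveI hE : IsEmpty (Fin (0 * Fintype.card F)) := by rw [Nat.zero_mul]; infer_instance
    refine ⟨fun _ c => isEmptyElim c, ?_, Dvd.dvd.mul_right hM.2.1 _, ?_⟩
    · intro cols hinj v
      exact isEmptyElim (cols 0)
    · intro K l x hK
      exact isEmptyElim l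
  have hMr : ∀ r : Fin n, (⟨r.val % n, Nat.mod_lt _ hn⟩ : Fin n) = r :=
    fun r => Fin.ext (Nat.mod_eq_of_lt r.isLt)
  refine ⟨fun r c => Qfun hn hm M r.val c.val, ?_, Dvd.dvd.mul_right hM.2.1 _, ?_⟩
  · -- strength 2
    intro cols hinj v
    beta_reduce
    have hne : cols 0 ≠ cols 1 := fun hc => absurd (hinj hc) (by decide)
    rw [Fintype.card_fin]
    rw [finCount' _
      (fun i => Qfun hn hm M i (cols 0).val = v 0 ∧ Qfun hn hm M i (cols 1).val = v 1)
      (fun r => Fin.forall_fin_two), range_mul_split]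
    by_cases hd : (cols 0).val % m = (cols 1).val % m
    · -- same M-column, different multiplier
      have hdiv : (cols 0).val / m ≠ (cols 1).val / m := by
        intro hcon
        apply hne
        apply Fin.ext
        calc (cols 0).val = m * ((cols 0).val / m) + (cols 0).val % m := (Nat.div_add_mod _ _).symm
          _ = m * ((cols 1).val / m) + (cols 1).val % m := by rw [hcon, hd]
          _ = (cols 1).val := Nat.div_add_mod _ _
      have hlt0 : (cols 0).val / m < Fintype.card F := by
        rw [Nat.div_lt_iff_lt_mul hm]; exact lt_of_lt_of_eq (cols 0).isLt (Nat.mul_comm m _)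
      have hlt1 : (cols 1).val / m < Fintype.card F := by
        rw [Nat.div_lt_iff_lt_mul hm]; exact lt_of_lt_of_eq (cols 1).isLt (Nat.mul_comm m _)
      have hw : gfun F ((cols 0).val / m) ≠ gfun F ((cols 1).val / m) :=
        fun hcon => hdiv (gfun_inj hlt0 hlt1 hcon)
      have hwsub : gfun F ((cols 0).val / m) - gfun F ((cols 1).val / m) ≠ 0 := sub_ne_zero.mpr hw
      obtain ⟨z, hzw⟩ : ∃ z : F,
          z * (gfun F ((cols 0).val / m) - gfun F ((cols 1).val / m)) = v 0 - v 1 :=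
        ⟨(v 0 - v 1) * (gfun F ((cols 0).val / m) - gfun F ((cols 1).val / m))⁻¹, by field_simp⟩
      obtain ⟨uz, huz, hguz⟩ : ∃ u, u < Fintype.card F ∧ gfun F u = z :=
        ⟨((Fintype.equivFin F) z).val, ((Fintype.equivFin F) z).isLt, gfun_apply z⟩
      have hfe : ∀ u, ((range n).filter fun r =>
            Qfun hn hm M (n*u+r) (cols 0).val = v 0 ∧ Qfun hn hm M (n*u+r) (cols 1).val = v 1)
          = (range n).filter fun r => gfun F u = z ∧
              M ⟨r % n, Nat.mod_lt _ hn⟩ ⟨(cols 0).val % m, Nat.mod_lt _ hm⟩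
                = v 0 - z * gfun F ((cols 0).val / m) := by
        intro u
        apply filter_congr
        intro r hr
        rw [mem_range] at hr
        rw [Qfun_shift hn hm M u r hr, Qfun_shift hn hm M u r hr]
        have hDD : (⟨(cols 1).val % m, Nat.mod_lt _ hm⟩ : Fin m)
            = ⟨(cols 0).val % m, Nat.mod_lt _ hm⟩ := Fin.ext hd.symm
        rw [hDD]
        constructor
        · rintro ⟨e1, e2⟩
          have hgu : gfun F u * (gfun F ((cols 0).val / m) - gfun F ((cols 1).val / m))
              = v 0 - v 1 := by linear_combination e1 - e2
          have hzu : gfun F u = z := mul_right_cancel₀ hwsub (hgu.trans hzw.symm)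
          refine ⟨hzu, ?_⟩
          rw [hzu] at e1
          linear_combination e1
        · rintro ⟨e1, e2⟩
          rw [e1, e2]
          exact ⟨by ring, by linear_combination -hzw⟩
      rw [Finset.sum_congr rfl fun u _ => congrArg Finset.card (hfe u)]
      have hcnt : ∀ u ∈ range (Fintype.card F),
          ((range n).filter fun r => gfun F u = z ∧
            M ⟨r % n, Nat.mod_lt _ hn⟩ ⟨(cols 0).val % m, Nat.mod_lt _ hm⟩
              = v 0 - z * gfun F ((cols 0).val / m)).card
          = if u = uz then ((range n).filter fun i =>
              M ⟨i % n, Nat.mod_lt _ hn⟩ ⟨(cols 0).val % m, Nat.mod_lt _ hm⟩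
                = v 0 - z * gfun F ((cols 0).val / m)).card else 0 := by
        intro u hu
        by_cases hcase : u = uz
        · subst hcase
          rw [if_pos rfl]
          congr 1
          apply filter_congr
          intro r _
          simp [hguz]
        · rw [if_neg hcase, Finset.card_eq_zero, Finset.filter_eq_empty_iff]
          intro r _
          rintro ⟨hgu, -⟩
          exact hcase (gfun_inj (mem_range.mp hu) huz (hgu.trans hguz.symm))
      rw [Finset.sum_congr rfl hcnt, Finset.sum_ite_eq' (range (Fintype.card F)) uz,
        if_pos (mem_range.mpr huz)]
      have hCC : ((range n).filter fun i =>
            M ⟨i % n, Nat.mod_lt _ hn⟩ ⟨(cols 0).val % m, Nat.mod_lt _ hm⟩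
              = v 0 - z * gfun F ((cols 0).val / m)).card
          = (univ.filter fun r : Fin n =>
              M r ⟨(cols 0).val % m, Nat.mod_lt _ hm⟩
                = v 0 - z * gfun F ((cols 0).val / m)).card :=
        (finCount' _ _ (fun r => by simp only [hMr r])).symm
      rw [hCC, pow_two, ← Nat.mul_assoc,
        col_bal hs ha M hM ⟨(cols 0).val % m, Nat.mod_lt _ hm⟩
          (v 0 - z * gfun F ((cols 0).val / m))]
    · -- distinct M-columns
      have key : ∀ u, ((range n).filter fun r =>
            Qfun hn hm M (n*u+r) (cols 0).val = v 0 ∧ Qfun hn hm M (n*u+r) (cols 1).val = v 1).card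
          * Fintype.card F ^ 2 = n := by
        intro u
        have hDne : (⟨(cols 0).val % m, Nat.mod_lt _ hm⟩ : Fin m)
            ≠ ⟨(cols 1).val % m, Nat.mod_lt _ hm⟩ := fun hcon => hd (congrArg Fin.val hcon)
        have hinj2 : Function.Injective
            ![(⟨(cols 0).val % m, Nat.mod_lt _ hm⟩ : Fin m), ⟨(cols 1).val % m, Nat.mod_lt _ hm⟩] := by
          intro i j hij
          fin_cases i <;> fin_cases j <;> simp_all
        have h3 := hM.1 _ hinj2
          ![v 0 - gfun F u * gfun F ((cols 0).val / m), v 1 - gfun F u * gfun F ((cols 1).val / m)]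
        rw [Fintype.card_fin] at h3
        rw [finCount' _ (fun i =>
              M ⟨i % n, Nat.mod_lt _ hn⟩ ⟨(cols 0).val % m, Nat.mod_lt _ hm⟩
                  = v 0 - gfun F u * gfun F ((cols 0).val / m) ∧
                M ⟨i % n, Nat.mod_lt _ hn⟩ ⟨(cols 1).val % m, Nat.mod_lt _ hm⟩
                  = v 1 - gfun F u * gfun F ((cols 1).val / m))
            (fun r => by rw [Fin.forall_fin_two]; simp [hMr r])] at h3
        have heq : ((range n).filter fun r =>
              Qfun hn hm M (n*u+r) (cols 0).val = v 0 ∧ Qfun hn hm M (n*u+r) (cols 1).val = v 1)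
            = (range n).filter fun i =>
                M ⟨i % n, Nat.mod_lt _ hn⟩ ⟨(cols 0).val % m, Nat.mod_lt _ hm⟩
                    = v 0 - gfun F u * gfun F ((cols 0).val / m) ∧
                  M ⟨i % n, Nat.mod_lt _ hn⟩ ⟨(cols 1).val % m, Nat.mod_lt _ hm⟩
                    = v 1 - gfun F u * gfun F ((cols 1).val / m) := by
          apply filter_congr
          intro r hr
          rw [mem_range] at hr
          rw [Qfun_shift hn hm M u r hr, Qfun_shift hn hm M u r hr]
          simp only [eq_sub_iff_add_eq]
        rw [heq]
        exact h3
      rw [Finset.sum_mul, Finset.sum_congr rfl fun u _ => key u, Finset.sum_const, card_range,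
        smul_eq_mul]
      exact Nat.mul_comm _ _
  · -- resolvability
    intro K l x hK
    beta_reduce
    obtain ⟨t, ht⟩ := hM.2.1
    have hb : 0 < a * Fintype.card F := Nat.mul_pos ha hs
    have htpos : 0 < t := by
      rcases Nat.eq_zero_or_pos t with h0 | h0
      · subst h0; simp at ht; omega
      · exact h0
    have hKlt : K < t * Fintype.card F := by
      have h2 : (K+1) * (a * Fintype.card F) ≤ (t * Fintype.card F) * (a * Fintype.card F) := by
        calc (K+1) * (a * Fintype.card F) ≤ n * Fintype.card F := hK
          _ = (t * Fintype.card F) * (a * Fintype.card F) := by rw [ht]; ring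
      have h3 := Nat.le_of_mul_le_mul_right h2 hb
      omega
    have hKdiv : K / t < Fintype.card F := by
      rw [Nat.div_lt_iff_lt_mul htpos]
      exact lt_of_lt_of_eq hKlt (Nat.mul_comm t _)
    rw [finCount' _
      (fun i => i / (a * Fintype.card F) = K ∧ Qfun hn hm M i l.val = x)
      (fun r => Iff.rfl), range_mul_split]
    have hfe : ∀ u, ((range n).filter fun r =>
          (n*u+r) / (a * Fintype.card F) = K ∧ Qfun hn hm M (n*u+r) l.val = x)
        = (range n).filter fun r => u * t + r / (a * Fintype.card F) = K ∧
            M ⟨r % n, Nat.mod_lt _ hn⟩ ⟨l.val % m, Nat.mod_lt _ hm⟩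
              = x - gfun F u * gfun F (l.val / m) := by
      intro u
      apply filter_congr
      intro r hr
      rw [mem_range] at hr
      rw [Qfun_shift hn hm M u r hr]
      have hdiv : (n*u+r) / (a * Fintype.card F) = u * t + r / (a * Fintype.card F) := by
        have h4 : n*u+r = (a * Fintype.card F) * (t * u) + r := by rw [ht]; ring
        rw [h4, Nat.mul_add_div hb, Nat.mul_comm t u]
      rw [hdiv]
      simp only [eq_sub_iff_add_eq]
    rw [Finset.sum_congr rfl fun u _ => congrArg Finset.card (hfe u)]
    have hcnt : ∀ u ∈ range (Fintype.card F),
        ((range n).filter fun r => u * t + r / (a * Fintype.card F) = K ∧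
            M ⟨r % n, Nat.mod_lt _ hn⟩ ⟨l.val % m, Nat.mod_lt _ hm⟩
              = x - gfun F u * gfun F (l.val / m)).card
          = if u = K / t then a else 0 := by
      intro u hu
      have hrb : ∀ r < n, r / (a * Fintype.card F) < t := by
        intro r hr
        rw [Nat.div_lt_iff_lt_mul hb]
        calc r < n := hr
          _ = t * (a * Fintype.card F) := by rw [ht]; ring
      by_cases hcase : u = K / t
      · subst hcase
        rw [if_pos rfl]
        have hiff : ∀ r ∈ range n,
            ((K / t) * t + r / (a * Fintype.card F) = K ∧
              M ⟨r % n, Nat.mod_lt _ hn⟩ ⟨l.val % m, Nat.mod_lt _ hm⟩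
                = x - gfun F (K / t) * gfun F (l.val / m))
            ↔ (r / (a * Fintype.card F) = K % t ∧
              M ⟨r % n, Nat.mod_lt _ hn⟩ ⟨l.val % m, Nat.mod_lt _ hm⟩
                = x - gfun F (K / t) * gfun F (l.val / m)) := by
          intro r hr
          have h5 : K / t * t + K % t = K := by
            rw [Nat.mul_comm]; exact Nat.div_add_mod K t
          constructor
          · rintro ⟨e1, hp⟩; exact ⟨by omega, hp⟩
          · rintro ⟨e1, hp⟩; exact ⟨by omega, hp⟩
        rw [filter_congr hiff]
        have hbound : (K % t + 1) * (a * Fintype.card F) ≤ n := by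
          have h6 : K % t < t := Nat.mod_lt _ htpos
          calc (K % t + 1) * (a * Fintype.card F) ≤ t * (a * Fintype.card F) :=
              Nat.mul_le_mul_right _ (by omega)
            _ = n := by rw [ht]; ring
        have h4 := hM.2.2 (K % t) ⟨l.val % m, Nat.mod_lt _ hm⟩
          (x - gfun F (K / t) * gfun F (l.val / m)) hbound
        rw [finCount' _ (fun i =>
              i / (a * Fintype.card F) = K % t ∧
              M ⟨i % n, Nat.mod_lt _ hn⟩ ⟨l.val % m, Nat.mod_lt _ hm⟩
                = x - gfun F (K / t) * gfun F (l.val / m))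
            (fun r => by simp only [hMr r])] at h4
        exact h4
      · rw [if_neg hcase, Finset.card_eq_zero, Finset.filter_eq_empty_iff]
        intro r hr
        rw [mem_range] at hr
        rintro ⟨e1, -⟩
        apply hcase
        have h8 : (u * t + r / (a * Fintype.card F)) / t = u := by
          rw [Nat.mul_comm u t, Nat.mul_add_div htpos, Nat.div_eq_of_lt (hrb r hr), Nat.add_zero]
        rw [← e1, h8]
    rw [Finset.sum_congr rfl hcnt, Finset.sum_ite_eq' (range (Fintype.card F)) (K / t),
      if_pos (mem_range.mpr hKdiv)]

lemma roa_cast {F : Type} [Fintype F] [DecidableEq F] {a n m n' m' : ℕ}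
    (hn : n = n') (hm : m = m') :
    (∃ M : Fin n → Fin m → F, IsROA M a) → ∃ M : Fin n' → Fin m' → F, IsROA M a := by
  subst hn; subst hm; exact id

/-- Proposition 6: write `s = Fintype.card F`.  If there exists an
`ROA(n₂, m₂, s, 2; a)` whose number of columns attains the upper bound
`m₂ = n₂(1 − 1/(as))/(s−1)` (expressed multiplicatively as
`m₂·as·(s−1) = n₂·(as−1)`), then for every `k ≥ 1` there exists an
`ROA(n₂·s^k, m, s, 2; a)` with `m = n₂·s^k·(1 − 1/(as))/(s−1)` (i.e.
`m·as·(s−1) = n₂·s^k·(as−1)`). -/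
theorem statement17 {F : Type} [Field F] [Fintype F] [DecidableEq F]
    {n2 m2 a : ℕ} (ha : 0 < a)
    (hm2 : m2 * (a * Fintype.card F) * (Fintype.card F - 1)
      = n2 * (a * Fintype.card F - 1))
    (h : ∃ M : Fin n2 → Fin m2 → F, IsROA M a)
    (k : ℕ) (hk : 0 < k) :
    ∃ m : ℕ, m * (a * Fintype.card F) * (Fintype.card F - 1)
        = n2 * Fintype.card F ^ k * (a * Fintype.card F - 1) ∧
      ∃ M : Fin (n2 * Fintype.card F ^ k) → Fin m → F, IsROA M a := by
  have key : ∀ j : ℕ,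
      ∃ M : Fin (n2 * Fintype.card F ^ j) → Fin (m2 * Fintype.card F ^ j) → F, IsROA M a := by
    intro j
    induction j with
    | zero => exact roa_cast (by rw [pow_zero, Nat.mul_one]) (by rw [pow_zero, Nat.mul_one]) h
    | succ j ih =>
      obtain ⟨M, hMj⟩ := ih
      obtain ⟨N, hN⟩ := step ha M hMj
      exact roa_cast (by rw [pow_succ, Nat.mul_assoc]) (by rw [pow_succ, Nat.mul_assoc]) ⟨N, hN⟩
  refine ⟨m2 * Fintype.card F ^ k, ?_, key k⟩
  calc m2 * Fintype.card F ^ k * (a * Fintype.card F) * (Fintype.card F - 1)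
      = m2 * (a * Fintype.card F) * (Fintype.card F - 1) * Fintype.card F ^ k := by ring
    _ = n2 * (a * Fintype.card F - 1) * Fintype.card F ^ k := by rw [hm2]
    _ = n2 * Fintype.card F ^ k * (a * Fintype.card F - 1) := by ring
end
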